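/- Let r2 ≥ 3 be odd. There is no graph with parameters (r2, r3) for any r3 with C(r2−1, 2) < r3 < C(r2, 2). -/

import Mathlib

open SimpleGraph Finset

/-- The K3-degree of a vertex: the number of triangles (3-cliques) of `G` containing `v`. -/
noncomputable def K3deg {V : Type*} (G : SimpleGraph V) (v : V) : ℕ :=
  {t : Finset V | G.IsNClique 3 t ∧ v ∈ t}.ncard

/-- The degree of a vertex, as the cardinality of its open neighbourhood. -/
noncomputable def deg {V : Type*} (G : SimpleGraph V) (v : V) : ℕ :=
  (G.neighborSet v).ncard

/-- `G` has parameters `(r2, r3)`: every vertex has degree `r2` and K3-degree `r3`. -/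
def HasParams {V : Type*} (G : SimpleGraph V) (r2 r3 : ℕ) : Prop :=
  ∀ v : V, deg G v = r2 ∧ K3deg G v = r3

set_option linter.unusedSectionVars false

private lemma two_mul_choose_two (n : ℕ) : 2 * n.choose 2 = n * (n - 1) := by
  rw [Nat.choose_two_right]
  exact Nat.two_mul_div_two_of_even (Nat.even_mul_pred_self n)

section Aux
variable {V : Type} [Fintype V] [DecidableEq V] (G : SimpleGraph V) [DecidableRel G.Adj]

/-- non-neighbours of `u` among the neighbours of `v`, other than `u` itself -/
private def sF (u v : V) : Finset V :=
  (G.neighborFinset v).filter (fun w => w ≠ u ∧ ¬ G.Adj u w)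

private lemma memN {v w : V} : w ∈ G.neighborFinset v ↔ G.Adj v w := by
  simp [mem_neighborFinset]

private lemma split_card {u v : V} (h : u ∈ G.neighborFinset v) :
    (sF G u v).card + (1 + (G.neighborFinset u ∩ G.neighborFinset v).card)
      = (G.neighborFinset v).card := by
  have hsplit := Finset.card_filter_add_card_filter_not
    (s := G.neighborFinset v) (p := fun w => w ≠ u ∧ ¬ G.Adj u w)
  have h2 : (G.neighborFinset v).filter (fun w => ¬ (w ≠ u ∧ ¬ G.Adj u w))
      = insert u (G.neighborFinset u ∩ G.neighborFinset v) := by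
    ext w
    simp only [mem_filter, mem_insert, mem_inter, mem_neighborFinset, not_and, not_not, ne_eq]
    constructor
    · rintro ⟨hwv, himp⟩
      by_cases hwu : w = u
      · exact Or.inl hwu
      · exact Or.inr ⟨himp hwu, hwv⟩
    · rintro (rfl | ⟨huw, hvw⟩)
      · exact ⟨(memN G).1 h, fun h'' => absurd rfl h''⟩
      · exact ⟨hvw, fun _ => huw⟩
  rw [h2] at hsplit
  rw [Finset.card_insert_of_notMem (by simp [mem_inter, mem_neighborFinset])] at hsplit
  rw [sF]
  omega

private lemma s_symm {r2 : ℕ} (hreg : ∀ w, (G.neighborFinset w).card = r2)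
    {u v : V} (h : G.Adj u v) : (sF G u v).card = (sF G v u).card := by
  have h1 := split_card G ((memN G).2 h.symm)
  have h2 := split_card G ((memN G).2 h)
  rw [hreg] at h1 h2
  have hint : (G.neighborFinset u ∩ G.neighborFinset v).card
      = (G.neighborFinset v ∩ G.neighborFinset u).card := by rw [Finset.inter_comm]
  omega

private lemma sum_inter_card_comm (S T : Finset V) :
    ∑ v ∈ S, (T ∩ G.neighborFinset v).card = ∑ t ∈ T, (S ∩ G.neighborFinset t).card := by
  have h1 : ∀ v, (T ∩ G.neighborFinset v) = T.filter (fun t => G.Adj t v) := by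
    intro v; ext t; simp [mem_neighborFinset, adj_comm]
  have h2 : ∀ t, (S ∩ G.neighborFinset t) = S.filter (fun v => G.Adj t v) := by
    intro t; ext v; simp [mem_neighborFinset]
  simp_rw [h1, h2, Finset.card_filter]
  exact Finset.sum_comm

private lemma sum_mu (v : V) :
    ∑ u ∈ G.neighborFinset v, (G.neighborFinset u ∩ G.neighborFinset v).card
      = 2 * (univ.filter (fun t : Finset V => G.IsNClique 3 t ∧ v ∈ t)).card := by
  set T := univ.filter (fun t : Finset V => G.IsNClique 3 t ∧ v ∈ t) with hT
  set N := G.neighborFinset v with hN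
  set PAIRS := (N ×ˢ N).filter (fun p : V × V => G.Adj p.1 p.2) with hP
  have step1 : ∑ u ∈ N, (G.neighborFinset u ∩ N).card = PAIRS.card := by
    rw [hP, Finset.card_filter, Finset.sum_product]
    apply Finset.sum_congr rfl
    intro u _
    rw [show G.neighborFinset u ∩ N = N.filter (fun w => G.Adj u w) by
      ext w; simp [hN, mem_neighborFinset, and_comm]]
    rw [Finset.card_filter]
  have hmem : ∀ p ∈ PAIRS, ({v, p.1, p.2} : Finset V) ∈ T := by
    rintro ⟨p1, p2⟩ hp
    rw [hP, mem_filter, mem_product] at hp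
    obtain ⟨⟨h1, h2⟩, h12⟩ := hp
    rw [hN, memN] at h1 h2
    rw [hT, mem_filter]
    exact ⟨mem_univ _, is3Clique_triple_iff.2 ⟨h1, h2, h12⟩, mem_insert_self _ _⟩
  have step2 : PAIRS.card = ∑ t ∈ T, (PAIRS.filter (fun p : V × V => ({v, p.1, p.2} : Finset V) = t)).card :=
    Finset.card_eq_sum_card_fiberwise hmem
  have hnorm : ∀ t ∈ T, ∃ b c, G.Adj v b ∧ G.Adj v c ∧ G.Adj b c ∧ t = ({v, b, c} : Finset V) := by
    intro t ht
    rw [hT, mem_filter] at ht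
    obtain ⟨-, hcl, hvt⟩ := ht
    obtain ⟨a, b, c, hab, hac, hbc, rfl⟩ := is3Clique_iff.1 hcl
    simp only [mem_insert, mem_singleton] at hvt
    rcases hvt with rfl | rfl | rfl
    · exact ⟨b, c, hab, hac, hbc, rfl⟩
    · exact ⟨a, c, hab.symm, hbc, hac, by rw [Finset.insert_comm]⟩
    · refine ⟨a, b, hac.symm, hbc.symm, hab, ?_⟩
      rw [Finset.pair_comm b v, Finset.insert_comm]
  have hfib : ∀ t ∈ T, (PAIRS.filter (fun p : V × V => ({v, p.1, p.2} : Finset V) = t)).card = 2 := by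
    intro t ht
    obtain ⟨b, c, hvb, hvc, hbc, rfl⟩ := hnorm t ht
    have hbcne : b ≠ c := hbc.ne
    have hfeq : PAIRS.filter (fun p : V × V => ({v, p.1, p.2} : Finset V) = {v, b, c})
        = {(b, c), (c, b)} := by
      ext ⟨p1, p2⟩
      simp only [mem_filter, hP, mem_product, hN, mem_neighborFinset, mem_insert,
        mem_singleton, Prod.mk.injEq]
      constructor
      · rintro ⟨⟨⟨h1, h2⟩, h12⟩, heq⟩
        have hm1 : p1 ∈ ({v, b, c} : Finset V) := by
          rw [← heq]; simp
        have hm2 : p2 ∈ ({v, b, c} : Finset V) := by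
          rw [← heq]; simp
        simp only [mem_insert, mem_singleton] at hm1 hm2
        have hp1v : p1 ≠ v := fun hh => G.irrefl (hh ▸ h1)
        have hp2v : p2 ≠ v := fun hh => G.irrefl (hh ▸ h2)
        have hp12 : p1 ≠ p2 := h12.ne
        rcases hm1 with rfl | rfl | rfl
        · exact absurd rfl hp1v
        · rcases hm2 with rfl | rfl | rfl
          · exact absurd rfl hp2v
          · exact absurd rfl hp12
          · exact Or.inl ⟨rfl, rfl⟩
        · rcases hm2 with rfl | rfl | rfl
          · exact absurd rfl hp2v
          · exact Or.inr ⟨rfl, rfl⟩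
          · exact absurd rfl hp12
      · rintro (⟨rfl, rfl⟩ | ⟨rfl, rfl⟩)
        · exact ⟨⟨⟨hvb, hvc⟩, hbc⟩, rfl⟩
        · exact ⟨⟨⟨hvc, hvb⟩, hbc.symm⟩, by rw [Finset.pair_comm]⟩
    rw [hfeq]
    rw [Finset.card_insert_of_notMem (by simp [Prod.mk.injEq]; exact fun h => absurd h hbcne)]
    simp
  rw [hN] at step1
  rw [step1, step2, Finset.sum_congr rfl hfib, Finset.sum_const, smul_eq_mul, mul_comm]



private lemma master {r2 r3 : ℕ}
    (hreg : ∀ w, (G.neighborFinset w).card = r2)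
    (hhand : ∀ w, (∑ u ∈ G.neighborFinset w, (sF G u w).card) + r2 + 2 * r3 = r2 * r2)
    (hlo' : (r2 - 1) * (r2 - 2) + 2 ≤ 2 * r3) (hr2 : 3 ≤ r2)
    {x y : V} (hxy : ¬ G.Adj x y)
    (hcom : (G.neighborFinset x ∩ G.neighborFinset y).Nonempty) :
    G.neighborFinset x = G.neighborFinset y := by
  by_cases hxyeq : x = y
  · rw [hxyeq]
  have hσ : ∀ w, (∑ u ∈ G.neighborFinset w, (sF G u w).card) + 4 ≤ 2 * r2 := by
    intro w
    have h1 := hhand w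
    obtain ⟨m, hm⟩ : ∃ m, r2 = m + 3 := ⟨r2 - 3, by omega⟩
    subst hm
    have e1 : m + 3 - 1 = m + 2 := by omega
    have e2 : m + 3 - 2 = m + 1 := by omega
    rw [e1, e2] at hlo'
    have x1 : (m+2) * (m+1) = m*m + 3*m + 2 := by ring
    have x2 : (m+3) * (m+3) = m*m + 6*m + 9 := by ring
    rw [x1] at hlo'
    rw [x2] at h1
    omega
  by_cases hBempty : G.neighborFinset x \ G.neighborFinset y = ∅
  · have hsub : G.neighborFinset x ⊆ G.neighborFinset y := by
      intro w hw
      by_contra hwn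
      exact absurd (mem_sdiff.2 ⟨hw, hwn⟩) (by rw [hBempty]; exact notMem_empty w)
    exact Finset.eq_of_subset_of_card_le hsub (by rw [hreg, hreg])
  exfalso
  have hβpos : 1 ≤ (G.neighborFinset x \ G.neighborFinset y).card :=
    card_pos.2 (Finset.nonempty_iff_ne_empty.2 hBempty)
  have hcx : (G.neighborFinset x ∩ G.neighborFinset y).card
      + (G.neighborFinset x \ G.neighborFinset y).card = r2 := by
    have h := Finset.card_inter_add_card_sdiff (G.neighborFinset x) (G.neighborFinset y)
    rwa [hreg] at h
  have hcy : (G.neighborFinset x ∩ G.neighborFinset y).card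
      + (G.neighborFinset y \ G.neighborFinset x).card = r2 := by
    have h := Finset.card_inter_add_card_sdiff (G.neighborFinset y) (G.neighborFinset x)
    rwa [hreg, Finset.inter_comm] at h
  -- μ ≥ 2 : a non-adjacent pair cannot have exactly one common neighbour
  have hμ2 : 2 ≤ (G.neighborFinset x ∩ G.neighborFinset y).card := by
    by_contra hlt
    push_neg at hlt
    have h1 : (G.neighborFinset x ∩ G.neighborFinset y).card = 1 := by
      have := card_pos.2 hcom; omega
    obtain ⟨v, hv⟩ := Finset.card_eq_one.1 h1
    have hvM : v ∈ G.neighborFinset x ∩ G.neighborFinset y := by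
      rw [hv]; exact mem_singleton_self v
    obtain ⟨hv1, hv2⟩ := mem_inter.1 hvM
    have hxv : x ∈ G.neighborFinset v := (memN G).2 ((memN G).1 hv1).symm
    have hyv : y ∈ G.neighborFinset v := (memN G).2 ((memN G).1 hv2).symm
    have hyx' : y ∈ (G.neighborFinset v).erase x :=
      mem_erase.2 ⟨fun h => hxyeq h.symm, hyv⟩
    have hDcard : (((G.neighborFinset v).erase x).erase y).card + 2 = r2 := by
      have c1 := Finset.card_erase_add_one hyx'
      have c2 := Finset.card_erase_add_one hxv
      rw [hreg] at c2; omega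
    have hnotboth : ∀ u ∈ ((G.neighborFinset v).erase x).erase y,
        ¬ G.Adj u x ∨ ¬ G.Adj u y := by
      intro u hu
      have h' := mem_erase.1 hu
      have h'' := mem_erase.1 h'.2
      by_contra hcon
      push_neg at hcon
      obtain ⟨hux2, huy2⟩ := hcon
      have hem : u ∈ G.neighborFinset x ∩ G.neighborFinset y :=
        mem_inter.2 ⟨(memN G).2 (hux2.symm), (memN G).2 (huy2.symm)⟩
      rw [hv, mem_singleton] at hem
      subst hem
      exact G.irrefl ((memN G).1 h''.2)
    have hsx : 1 + ((((G.neighborFinset v).erase x).erase y).filter (fun u => ¬ G.Adj u x)).card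
        ≤ (sF G x v).card := by
      have hsub : insert y ((((G.neighborFinset v).erase x).erase y).filter (fun u => ¬ G.Adj u x))
          ⊆ sF G x v := by
        intro w hw
        rcases mem_insert.1 hw with rfl | hw2
        · exact mem_filter.2 ⟨hyv, fun h => hxyeq h.symm, fun h => hxy h⟩
        · obtain ⟨hwD, hwnadj⟩ := mem_filter.1 hw2
          have h' := mem_erase.1 hwD
          have h'' := mem_erase.1 h'.2
          exact mem_filter.2 ⟨h''.2, h''.1, fun h => hwnadj h.symm⟩
      have hycard : y ∉ (((G.neighborFinset v).erase x).erase y).filter (fun u => ¬ G.Adj u x) := by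
        intro h
        exact (mem_erase.1 (mem_filter.1 h).1).1 rfl
      have hc := Finset.card_le_card hsub
      rw [Finset.card_insert_of_notMem hycard] at hc
      omega
    have hsy : 1 + ((((G.neighborFinset v).erase x).erase y).filter (fun u => ¬ G.Adj u y)).card
        ≤ (sF G y v).card := by
      have hsub : insert x ((((G.neighborFinset v).erase x).erase y).filter (fun u => ¬ G.Adj u y))
          ⊆ sF G y v := by
        intro w hw
        rcases mem_insert.1 hw with rfl | hw2
        · exact mem_filter.2 ⟨hxv, hxyeq, fun h => hxy h.symm⟩
        · obtain ⟨hwD, hwnadj⟩ := mem_filter.1 hw2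
          have h' := mem_erase.1 hwD
          have h'' := mem_erase.1 h'.2
          exact mem_filter.2 ⟨h''.2, h'.1, fun h => hwnadj h.symm⟩
      have hxcard : x ∉ (((G.neighborFinset v).erase x).erase y).filter (fun u => ¬ G.Adj u y) := by
        intro h
        exact (mem_erase.1 (mem_erase.1 (mem_filter.1 h).1).2).1 rfl
      have hc := Finset.card_le_card hsub
      rw [Finset.card_insert_of_notMem hxcard] at hc
      omega
    have h3 : ∀ u ∈ ((G.neighborFinset v).erase x).erase y, 1 ≤ (sF G u v).card := by
      intro u hu
      have h' := mem_erase.1 hu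
      have h'' := mem_erase.1 h'.2
      rcases hnotboth u hu with hnx | hny
      · exact card_pos.2 ⟨x, mem_filter.2 ⟨hxv, fun h => h''.1 h.symm, hnx⟩⟩
      · exact card_pos.2 ⟨y, mem_filter.2 ⟨hyv, fun h => h'.1 h.symm, hny⟩⟩
    have h4 : (((G.neighborFinset v).erase x).erase y).card
        ≤ ((((G.neighborFinset v).erase x).erase y).filter (fun u => ¬ G.Adj u x)).card
          + ((((G.neighborFinset v).erase x).erase y).filter (fun u => ¬ G.Adj u y)).card := by
      have hcover : (((G.neighborFinset v).erase x).erase y)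
          ⊆ (((G.neighborFinset v).erase x).erase y).filter (fun u => ¬ G.Adj u x)
            ∪ (((G.neighborFinset v).erase x).erase y).filter (fun u => ¬ G.Adj u y) := by
        intro u hu
        rcases hnotboth u hu with h | h
        · exact mem_union_left _ (mem_filter.2 ⟨hu, h⟩)
        · exact mem_union_right _ (mem_filter.2 ⟨hu, h⟩)
      exact le_trans (Finset.card_le_card hcover) (Finset.card_union_le _ _)
    have hxnot : x ∉ insert y (((G.neighborFinset v).erase x).erase y) := by
      intro h
      rcases mem_insert.1 h with h' | h'
      · exact hxyeq h'
      · exact (mem_erase.1 (mem_erase.1 h').2).1 rfl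
    have hynot : y ∉ ((G.neighborFinset v).erase x).erase y := fun h => (mem_erase.1 h).1 rfl
    have hsum : ∑ u ∈ G.neighborFinset v, (sF G u v).card
        = (sF G x v).card + ((sF G y v).card
          + ∑ u ∈ ((G.neighborFinset v).erase x).erase y, (sF G u v).card) := by
      conv_lhs => rw [show G.neighborFinset v
        = insert x (insert y (((G.neighborFinset v).erase x).erase y)) by
          rw [Finset.insert_erase hyx', Finset.insert_erase hxv]]
      rw [Finset.sum_insert hxnot, Finset.sum_insert hynot]
    have h5 : (((G.neighborFinset v).erase x).erase y).card
        ≤ ∑ u ∈ ((G.neighborFinset v).erase x).erase y, (sF G u v).card := by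
      have := Finset.sum_le_sum h3
      rwa [Finset.sum_const, smul_eq_mul, mul_one] at this
    have hfin := hσ v
    omega
  -- the four per-element chains, summed
  have S3 : (G.neighborFinset x ∩ G.neighborFinset y).card
      + ∑ v ∈ G.neighborFinset x ∩ G.neighborFinset y,
          ((G.neighborFinset x \ G.neighborFinset y) ∩ G.neighborFinset v).card
      ≤ ∑ v ∈ G.neighborFinset x ∩ G.neighborFinset y, (sF G y v).card := by
    have c3 : ∀ v ∈ G.neighborFinset x ∩ G.neighborFinset y,
        1 + ((G.neighborFinset x \ G.neighborFinset y) ∩ G.neighborFinset v).card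
          ≤ (sF G y v).card := by
      intro v hv
      obtain ⟨hv1, hv2⟩ := mem_inter.1 hv
      have hxv : x ∈ G.neighborFinset v := (memN G).2 ((memN G).1 hv1).symm
      have hsub : insert x ((G.neighborFinset x \ G.neighborFinset y) ∩ G.neighborFinset v)
          ⊆ sF G y v := by
        intro w hw
        rcases mem_insert.1 hw with rfl | hw2
        · exact mem_filter.2 ⟨hxv, hxyeq, fun h => hxy h.symm⟩
        · obtain ⟨hwB, hwv⟩ := mem_inter.1 hw2
          obtain ⟨hwx, hwny⟩ := mem_sdiff.1 hwB
          refine mem_filter.2 ⟨hwv, ?_, ?_⟩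
          · intro h; subst h; exact hxy ((memN G).1 hwx)
          · intro h; exact hwny ((memN G).2 h)
      have hxnotin : x ∉ (G.neighborFinset x \ G.neighborFinset y) ∩ G.neighborFinset v := by
        intro h
        exact G.irrefl ((memN G).1 (mem_sdiff.1 (mem_inter.1 h).1).1)
      have hc := Finset.card_le_card hsub
      rw [Finset.card_insert_of_notMem hxnotin] at hc
      omega
    have := Finset.sum_le_sum c3
    rwa [Finset.sum_add_distrib, Finset.sum_const, smul_eq_mul, mul_one] at this
  have S4 : (G.neighborFinset x ∩ G.neighborFinset y).card
      + ∑ v ∈ G.neighborFinset x ∩ G.neighborFinset y,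
          ((G.neighborFinset y \ G.neighborFinset x) ∩ G.neighborFinset v).card
      ≤ ∑ v ∈ G.neighborFinset x ∩ G.neighborFinset y, (sF G x v).card := by
    have c4 : ∀ v ∈ G.neighborFinset x ∩ G.neighborFinset y,
        1 + ((G.neighborFinset y \ G.neighborFinset x) ∩ G.neighborFinset v).card
          ≤ (sF G x v).card := by
      intro v hv
      obtain ⟨hv1, hv2⟩ := mem_inter.1 hv
      have hyv : y ∈ G.neighborFinset v := (memN G).2 ((memN G).1 hv2).symm
      have hsub : insert y ((G.neighborFinset y \ G.neighborFinset x) ∩ G.neighborFinset v)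
          ⊆ sF G x v := by
        intro w hw
        rcases mem_insert.1 hw with rfl | hw2
        · exact mem_filter.2 ⟨hyv, fun h => hxyeq h.symm, fun h => hxy h⟩
        · obtain ⟨hwC, hwv⟩ := mem_inter.1 hw2
          obtain ⟨hwy, hwnx⟩ := mem_sdiff.1 hwC
          refine mem_filter.2 ⟨hwv, ?_, ?_⟩
          · intro h; subst h; exact hxy ((memN G).1 hwy).symm
          · intro h; exact hwnx ((memN G).2 h)
      have hynotin : y ∉ (G.neighborFinset y \ G.neighborFinset x) ∩ G.neighborFinset v := by
        intro h
        exact G.irrefl ((memN G).1 (mem_sdiff.1 (mem_inter.1 h).1).1)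
      have hc := Finset.card_le_card hsub
      rw [Finset.card_insert_of_notMem hynotin] at hc
      omega
    have := Finset.sum_le_sum c4
    rwa [Finset.sum_add_distrib, Finset.sum_const, smul_eq_mul, mul_one] at this
  have S5 : (G.neighborFinset x \ G.neighborFinset y).card
        * (G.neighborFinset x ∩ G.neighborFinset y).card
      ≤ ∑ z ∈ G.neighborFinset x \ G.neighborFinset y,
          ((G.neighborFinset x ∩ G.neighborFinset y) ∩ G.neighborFinset z).card
        + ∑ z ∈ G.neighborFinset x \ G.neighborFinset y, (sF G z x).card := by
    have c5 : ∀ z ∈ G.neighborFinset x \ G.neighborFinset y,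
        (G.neighborFinset x ∩ G.neighborFinset y).card
          ≤ ((G.neighborFinset x ∩ G.neighborFinset y) ∩ G.neighborFinset z).card
            + (sF G z x).card := by
      intro z hz
      obtain ⟨hzx, hzny⟩ := mem_sdiff.1 hz
      have hdecomp := Finset.card_inter_add_card_sdiff
        (G.neighborFinset x ∩ G.neighborFinset y) (G.neighborFinset z)
      have hsub : (G.neighborFinset x ∩ G.neighborFinset y) \ G.neighborFinset z ⊆ sF G z x := by
        intro w hw
        obtain ⟨hwM, hwnz⟩ := mem_sdiff.1 hw
        obtain ⟨hw1, hw2⟩ := mem_inter.1 hwM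
        refine mem_filter.2 ⟨hw1, ?_, ?_⟩
        · intro h; subst h; exact hzny hw2
        · intro h; exact hwnz ((memN G).2 h)
      have := Finset.card_le_card hsub
      omega
    have := Finset.sum_le_sum c5
    rwa [Finset.sum_add_distrib, Finset.sum_const, smul_eq_mul] at this
  have S6 : (G.neighborFinset y \ G.neighborFinset x).card
        * (G.neighborFinset x ∩ G.neighborFinset y).card
      ≤ ∑ z ∈ G.neighborFinset y \ G.neighborFinset x,
          ((G.neighborFinset x ∩ G.neighborFinset y) ∩ G.neighborFinset z).card
        + ∑ z ∈ G.neighborFinset y \ G.neighborFinset x, (sF G z y).card := by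
    have c6 : ∀ z ∈ G.neighborFinset y \ G.neighborFinset x,
        (G.neighborFinset x ∩ G.neighborFinset y).card
          ≤ ((G.neighborFinset x ∩ G.neighborFinset y) ∩ G.neighborFinset z).card
            + (sF G z y).card := by
      intro z hz
      obtain ⟨hzy, hznx⟩ := mem_sdiff.1 hz
      have hdecomp := Finset.card_inter_add_card_sdiff
        (G.neighborFinset x ∩ G.neighborFinset y) (G.neighborFinset z)
      have hsub : (G.neighborFinset x ∩ G.neighborFinset y) \ G.neighborFinset z ⊆ sF G z y := by
        intro w hw
        obtain ⟨hwM, hwnz⟩ := mem_sdiff.1 hw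
        obtain ⟨hw1, hw2⟩ := mem_inter.1 hwM
        refine mem_filter.2 ⟨hw2, ?_, ?_⟩
        · intro h; subst h; exact hznx hw1
        · intro h; exact hwnz ((memN G).2 h)
      have := Finset.card_le_card hsub
      omega
    have := Finset.sum_le_sum c6
    rwa [Finset.sum_add_distrib, Finset.sum_const, smul_eq_mul] at this
  -- double counting
  have D1 : ∑ v ∈ G.neighborFinset x ∩ G.neighborFinset y,
        ((G.neighborFinset x \ G.neighborFinset y) ∩ G.neighborFinset v).card
      = ∑ z ∈ G.neighborFinset x \ G.neighborFinset y,
          ((G.neighborFinset x ∩ G.neighborFinset y) ∩ G.neighborFinset z).card :=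
    sum_inter_card_comm G _ _
  have D2 : ∑ v ∈ G.neighborFinset x ∩ G.neighborFinset y,
        ((G.neighborFinset y \ G.neighborFinset x) ∩ G.neighborFinset v).card
      = ∑ z ∈ G.neighborFinset y \ G.neighborFinset x,
          ((G.neighborFinset x ∩ G.neighborFinset y) ∩ G.neighborFinset z).card :=
    sum_inter_card_comm G _ _
  -- handshake splits
  have SP1 : ∑ z ∈ G.neighborFinset y \ G.neighborFinset x, (sF G z y).card
        + ∑ v ∈ G.neighborFinset x ∩ G.neighborFinset y, (sF G y v).card
      = ∑ u ∈ G.neighborFinset y, (sF G u y).card := by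
    have hdisj : Disjoint (G.neighborFinset y \ G.neighborFinset x)
        (G.neighborFinset y ∩ G.neighborFinset x) :=
      Finset.sdiff_disjoint.mono_right inter_subset_right
    have hu : (G.neighborFinset y \ G.neighborFinset x)
        ∪ (G.neighborFinset y ∩ G.neighborFinset x) = G.neighborFinset y :=
      Finset.sdiff_union_inter _ _
    have := Finset.sum_union (f := fun u => (sF G u y).card) hdisj
    rw [hu] at this
    rw [this]
    congr 1
    rw [Finset.inter_comm (G.neighborFinset y) (G.neighborFinset x)]
    exact Finset.sum_congr rfl
      (fun v hv => s_symm G hreg ((memN G).1 (mem_inter.1 hv).2))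
  have SP2 : ∑ z ∈ G.neighborFinset x \ G.neighborFinset y, (sF G z x).card
        + ∑ v ∈ G.neighborFinset x ∩ G.neighborFinset y, (sF G x v).card
      = ∑ u ∈ G.neighborFinset x, (sF G u x).card := by
    have hdisj : Disjoint (G.neighborFinset x \ G.neighborFinset y)
        (G.neighborFinset x ∩ G.neighborFinset y) :=
      Finset.sdiff_disjoint.mono_right inter_subset_right
    have hu : (G.neighborFinset x \ G.neighborFinset y)
        ∪ (G.neighborFinset x ∩ G.neighborFinset y) = G.neighborFinset x :=
      Finset.sdiff_union_inter _ _
    have := Finset.sum_union (f := fun u => (sF G u x).card) hdisj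
    rw [hu] at this
    rw [this]
    congr 1
    exact Finset.sum_congr rfl
      (fun v hv => s_symm G hreg ((memN G).1 (mem_inter.1 hv).1))
  -- final arithmetic
  have hσx := hσ x
  have hσy := hσ y
  have hγ : (G.neighborFinset y \ G.neighborFinset x).card
      = (G.neighborFinset x \ G.neighborFinset y).card := by omega
  rw [hγ] at S6
  have hKge : (G.neighborFinset x ∩ G.neighborFinset y).card
        + 2 * (G.neighborFinset x \ G.neighborFinset y).card
      ≤ (G.neighborFinset x \ G.neighborFinset y).card
          * (G.neighborFinset x ∩ G.neighborFinset y).card + 2 := by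
    obtain ⟨a, ha⟩ : ∃ a, (G.neighborFinset x ∩ G.neighborFinset y).card = a + 2 :=
      ⟨(G.neighborFinset x ∩ G.neighborFinset y).card - 2, by omega⟩
    obtain ⟨b, hb⟩ : ∃ b, (G.neighborFinset x \ G.neighborFinset y).card = b + 1 :=
      ⟨(G.neighborFinset x \ G.neighborFinset y).card - 1, by omega⟩
    rw [ha, hb]
    have e : (b+1)*(a+2) = a*b + a + 2*b + 2 := by ring
    rw [e]
    omega
  omega



private lemma deg_eq (v : V) : deg G v = (G.neighborFinset v).card := by
  have h : (G.neighborSet v) = ↑(G.neighborFinset v) := by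
    rw [neighborFinset_def, Set.coe_toFinset]
  rw [deg, ← Set.ncard_coe_finset]; exact congrArg Set.ncard h

private lemma K3deg_eq (v : V) :
    K3deg G v = (univ.filter (fun t : Finset V => G.IsNClique 3 t ∧ v ∈ t)).card := by
  rw [K3deg]
  rw [show {t : Finset V | G.IsNClique 3 t ∧ v ∈ t}
      = ↑(univ.filter (fun t : Finset V => G.IsNClique 3 t ∧ v ∈ t)) by
    ext t; simp]
  rw [Set.ncard_coe_finset]

end Aux

theorem stmt14 (r2 r3 : ℕ) (hr2 : 3 ≤ r2) (hodd : Odd r2)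
    (hlo : Nat.choose (r2 - 1) 2 < r3) (hhi : r3 < Nat.choose r2 2) :
    ¬ ∃ (V : Type) (_ : Fintype V) (_ : Nonempty V) (G : SimpleGraph V),
      HasParams G r2 r3 := by
  rintro ⟨V, fV, neV, G, hG⟩
  letI := fV
  letI : DecidableEq V := Classical.decEq V
  letI : DecidableRel G.Adj := Classical.decRel _
  have hreg : ∀ w, (G.neighborFinset w).card = r2 := fun w => by
    rw [← deg_eq G w]; exact (hG w).1
  have htri : ∀ w, (univ.filter (fun t : Finset V => G.IsNClique 3 t ∧ w ∈ t)).card = r3 :=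
    fun w => by rw [← K3deg_eq G w]; exact (hG w).2
  have hhand : ∀ w, (∑ u ∈ G.neighborFinset w, (sF G u w).card) + r2 + 2 * r3 = r2 * r2 := by
    intro w
    have hs : ∑ u ∈ G.neighborFinset w,
        ((sF G u w).card + (1 + (G.neighborFinset u ∩ G.neighborFinset w).card))
        = ∑ _u ∈ G.neighborFinset w, r2 := by
      refine Finset.sum_congr rfl (fun u hu => ?_)
      rw [split_card G hu, hreg w]
    rw [Finset.sum_const, hreg w, smul_eq_mul] at hs
    rw [Finset.sum_add_distrib, Finset.sum_add_distrib, Finset.sum_const, hreg w,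
      smul_eq_mul, mul_one, sum_mu G w, htri w] at hs
    omega
  have hch1 := two_mul_choose_two (r2 - 1)
  have hch2 := two_mul_choose_two r2
  have hr21 : r2 - 1 - 1 = r2 - 2 := by omega
  rw [hr21] at hch1
  have hlo' : (r2 - 1) * (r2 - 2) + 2 ≤ 2 * r3 := by omega
  have hhi' : 2 * r3 + 2 ≤ r2 * (r2 - 1) := by omega
  have hmaster : ∀ x y : V, ¬ G.Adj x y →
      (G.neighborFinset x ∩ G.neighborFinset y).Nonempty →
      G.neighborFinset x = G.neighborFinset y :=
    fun x y hxy hcom => master G hreg hhand hlo' hr2 hxy hcom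
  have hmemP : ∀ u : V, u ∈ univ.filter
      (fun w => ¬ G.Adj u w ∧ G.neighborFinset w = G.neighborFinset u) :=
    fun u => mem_filter.2 ⟨mem_univ u, fun h => G.irrefl h, rfl⟩
  have hE2 : ∀ u v : V, G.Adj v u → (sF G u v).card + 1
      = (univ.filter (fun w => ¬ G.Adj u w ∧ G.neighborFinset w = G.neighborFinset u)).card := by
    intro u v h
    have hE1 : sF G u v
        = (univ.filter (fun w => ¬ G.Adj u w ∧ G.neighborFinset w = G.neighborFinset u)).erase u := by
      ext w
      simp only [sF, mem_filter, mem_erase, mem_univ, true_and, memN, ne_eq]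
      constructor
      · rintro ⟨hvw, hwu, hnadj⟩
        exact ⟨hwu, hnadj,
          (hmaster u w hnadj ⟨v, mem_inter.2 ⟨(memN G).2 h.symm, (memN G).2 hvw.symm⟩⟩).symm⟩
      · rintro ⟨hwu, hnadj, heq⟩
        refine ⟨?_, hwu, hnadj⟩
        have hv : v ∈ G.neighborFinset w := by rw [heq]; exact (memN G).2 h.symm
        exact ((memN G).1 hv).symm
    rw [hE1]
    exact Finset.card_erase_add_one (hmemP u)
  obtain ⟨v0⟩ := neV
  have hkey : r2 * (univ.filter
        (fun w => ¬ G.Adj v0 w ∧ G.neighborFinset w = G.neighborFinset v0)).card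
      + 2 * r3 = r2 * r2 := by
    have h1 : ∀ u ∈ G.neighborFinset v0, (sF G u v0).card + 1
        = (univ.filter
            (fun w => ¬ G.Adj v0 w ∧ G.neighborFinset w = G.neighborFinset v0)).card := by
      intro u hu
      have hadj : G.Adj v0 u := (memN G).1 hu
      have e1 := hE2 u v0 hadj
      have e2 := hE2 v0 u hadj.symm
      have e3 := s_symm G hreg hadj.symm
      omega
    have h2 : ∑ u ∈ G.neighborFinset v0, ((sF G u v0).card + 1)
        = r2 * (univ.filter
            (fun w => ¬ G.Adj v0 w ∧ G.neighborFinset w = G.neighborFinset v0)).card := by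
      rw [Finset.sum_congr rfl h1, Finset.sum_const, hreg v0, smul_eq_mul]
    rw [Finset.sum_add_distrib, Finset.sum_const, hreg v0, smul_eq_mul, mul_one] at h2
    have h3 := hhand v0
    omega
  have hpp1 : 1 ≤ (univ.filter
      (fun w => ¬ G.Adj v0 w ∧ G.neighborFinset w = G.neighborFinset v0)).card :=
    card_pos.2 ⟨v0, hmemP v0⟩
  have hcase : (univ.filter
        (fun w => ¬ G.Adj v0 w ∧ G.neighborFinset w = G.neighborFinset v0)).card ≤ 1
      ∨ (univ.filter
        (fun w => ¬ G.Adj v0 w ∧ G.neighborFinset w = G.neighborFinset v0)).card = 2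
      ∨ 3 ≤ (univ.filter
        (fun w => ¬ G.Adj v0 w ∧ G.neighborFinset w = G.neighborFinset v0)).card := by
    omega
  obtain ⟨k, hk⟩ := hodd
  rcases hcase with hc | hc | hc
  · have hle := Nat.mul_le_mul_left r2 hc
    obtain ⟨m, hm⟩ : ∃ m, r2 = m + 3 := ⟨r2 - 3, by omega⟩
    subst hm
    have e2' : m + 3 - 1 = m + 2 := by omega
    rw [e2'] at hhi'
    have x2 : (m+3)*(m+3) = m*m + 6*m + 9 := by ring
    have x3 : (m+3)*(m+2) = m*m + 5*m + 6 := by ring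
    rw [x2] at hkey
    rw [x3] at hhi'
    rw [mul_one] at hle
    omega
  · rw [hc] at hkey
    subst hk
    have x2 : (2*k+1)*(2*k+1) = 4*(k*k) + 4*k + 1 := by ring
    rw [x2] at hkey
    omega
  · have hle := Nat.mul_le_mul_left r2 hc
    obtain ⟨m, hm⟩ : ∃ m, r2 = m + 3 := ⟨r2 - 3, by omega⟩
    subst hm
    have e1' : m + 3 - 1 = m + 2 := by omega
    have e2'' : m + 3 - 2 = m + 1 := by omega
    rw [e1', e2''] at hlo'
    have x1 : (m+2)*(m+1) = m*m + 3*m + 2 := by ring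
    have x2 : (m+3)*(m+3) = m*m + 6*m + 9 := by ring
    rw [x1] at hlo'
    rw [x2] at hkey
    omega
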